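/- Let K = ⟨T,A⟩ be an ELHI_¬ knowledge base whose TBox T is classically consistent and let q be a Boolean conjunctive query. If K ⊨_brave q (i.e., ⟨T,A'⟩ ⊨ q for some repair A' of K), then K ⊨₄ q. -/

import Mathlib

namespace Para

/-! ### Syntax -/

inductive Role (RN : Type) : Type where
  | name : RN → Role RN
  | inv  : RN → Role RN

inductive Concept (CN RN : Type) : Type where
  | top   : Concept CN RN
  | atom  : CN → Concept CN RN
  | neg   : Concept CN RN → Concept CN RN
  | tri   : Concept CN RN → Concept CN RN
  | inter : Concept CN RN → Concept CN RN → Concept CN RN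
  | all   : Role RN → Concept CN RN → Concept CN RN

namespace Concept
variable {CN RN : Type}
def bot : Concept CN RN := neg top
def union (C D : Concept CN RN) : Concept CN RN := neg (inter (neg C) (neg D))
def ex (S : Role RN) (C : Concept CN RN) : Concept CN RN := neg (all S (neg C))
end Concept

inductive DLAxiom (CN RN : Type) : Type where
  | cinc : Concept CN RN → Concept CN RN → DLAxiom CN RN
  | rinc : Role RN → Role RN → DLAxiom CN RN

inductive Assertion (CN RN IN : Type) : Type where
  | ca : CN → IN → Assertion CN RN IN
  | ra : RN → IN → IN → Assertion CN RN IN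

inductive Frm (CN RN IN : Type) : Type where
  | ax : DLAxiom CN RN → Frm CN RN IN
  | assert : Assertion CN RN IN → Frm CN RN IN

/-! ### Four-valued interpretations -/

structure FourInterp (CN RN IN : Type) : Type 1 where
  Dom : Type
  dom_nonempty : Nonempty Dom
  cpos : CN → Set Dom
  cneg : CN → Set Dom
  rext : RN → Set (Dom × Dom)
  ind : IN → Dom

variable {CN RN IN V : Type}

def FourInterp.rInterp (I : FourInterp CN RN IN) : Role RN → Set (I.Dom × I.Dom)
  | .name R => I.rext R
  | .inv R  => {p | (p.2, p.1) ∈ I.rext R}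

/-- Positive and negative extensions of a concept, as a pair. -/
def FourInterp.ext (I : FourInterp CN RN IN) : Concept CN RN → Set I.Dom × Set I.Dom
  | .top => (Set.univ, ∅)
  | .atom A => (I.cpos A, I.cneg A)
  | .neg C => ((I.ext C).2, (I.ext C).1)
  | .tri C => ((I.ext C).1, ((I.ext C).1)ᶜ)
  | .inter C D => ((I.ext C).1 ∩ (I.ext D).1, (I.ext C).2 ∪ (I.ext D).2)
  | .all S C => ({x | ∀ y, (x, y) ∈ I.rInterp S → y ∈ (I.ext C).1},
                 {x | ∃ y, (x, y) ∈ I.rInterp S ∧ y ∈ (I.ext C).2})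

def FourInterp.pExt (I : FourInterp CN RN IN) (C : Concept CN RN) : Set I.Dom := (I.ext C).1
def FourInterp.nExt (I : FourInterp CN RN IN) (C : Concept CN RN) : Set I.Dom := (I.ext C).2

def FourInterp.satAx (I : FourInterp CN RN IN) : DLAxiom CN RN → Prop
  | .cinc C D => I.pExt C ⊆ I.pExt D
  | .rinc S S' => I.rInterp S ⊆ I.rInterp S'

def FourInterp.satAssert (I : FourInterp CN RN IN) : Assertion CN RN IN → Prop
  | .ca A a => I.ind a ∈ I.cpos A
  | .ra R a b => (I.ind a, I.ind b) ∈ I.rext R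

def FourInterp.satFrm (I : FourInterp CN RN IN) : Frm CN RN IN → Prop
  | .ax ax => I.satAx ax
  | .assert α => I.satAssert α

/-! ### Classical interpretations -/

structure ClassInterp (CN RN IN : Type) : Type 1 where
  Dom : Type
  dom_nonempty : Nonempty Dom
  cext : CN → Set Dom
  rext : RN → Set (Dom × Dom)
  ind : IN → Dom

def ClassInterp.rInterp (J : ClassInterp CN RN IN) : Role RN → Set (J.Dom × J.Dom)
  | .name R => J.rext R
  | .inv R  => {p | (p.2, p.1) ∈ J.rext R}

def ClassInterp.ext (J : ClassInterp CN RN IN) : Concept CN RN → Set J.Dom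
  | .top => Set.univ
  | .atom A => J.cext A
  | .neg C => (J.ext C)ᶜ
  | .tri C => J.ext C
  | .inter C D => J.ext C ∩ J.ext D
  | .all S C => {x | ∀ y, (x, y) ∈ J.rInterp S → y ∈ J.ext C}

def ClassInterp.satAx (J : ClassInterp CN RN IN) : DLAxiom CN RN → Prop
  | .cinc C D => J.ext C ⊆ J.ext D
  | .rinc S S' => J.rInterp S ⊆ J.rInterp S'

def ClassInterp.satAssert (J : ClassInterp CN RN IN) : Assertion CN RN IN → Prop
  | .ca A a => J.ind a ∈ J.cext A
  | .ra R a b => (J.ind a, J.ind b) ∈ J.rext R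

def ClassInterp.satFrm (J : ClassInterp CN RN IN) : Frm CN RN IN → Prop
  | .ax ax => J.satAx ax
  | .assert α => J.satAssert α

/-! ### Knowledge bases -/

structure KB (CN RN IN : Type) : Type where
  tbox : Set (DLAxiom CN RN)
  abox : Set (Assertion CN RN IN)
  tbox_finite : tbox.Finite
  abox_finite : abox.Finite

def FourInterp.satKB (I : FourInterp CN RN IN) (K : KB CN RN IN) : Prop :=
  (∀ ax ∈ K.tbox, I.satAx ax) ∧ (∀ α ∈ K.abox, I.satAssert α)

def ClassInterp.satKB (J : ClassInterp CN RN IN) (K : KB CN RN IN) : Prop :=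
  (∀ ax ∈ K.tbox, J.satAx ax) ∧ (∀ α ∈ K.abox, J.satAssert α)

def fourEntailsFrm (K : KB CN RN IN) (φ : Frm CN RN IN) : Prop :=
  ∀ I : FourInterp CN RN IN, I.satKB K → I.satFrm φ

def clEntailsFrm (K : KB CN RN IN) (φ : Frm CN RN IN) : Prop :=
  ∀ J : ClassInterp CN RN IN, J.satKB K → J.satFrm φ


/-! ### Negation normal form -/

inductive IsNNF {CN RN : Type} : Concept CN RN → Prop where
  | top : IsNNF Concept.top
  | bot : IsNNF Concept.bot
  | atom (A : CN) : IsNNF (Concept.atom A)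
  | negAtom (A : CN) : IsNNF (Concept.neg (Concept.atom A))
  | triAtom (A : CN) : IsNNF (Concept.tri (Concept.atom A))
  | triNegAtom (A : CN) : IsNNF (Concept.tri (Concept.neg (Concept.atom A)))
  | negTriAtom (A : CN) : IsNNF (Concept.neg (Concept.tri (Concept.atom A)))
  | negTriNegAtom (A : CN) : IsNNF (Concept.neg (Concept.tri (Concept.neg (Concept.atom A))))
  | inter {C D : Concept CN RN} : IsNNF C → IsNNF D → IsNNF (Concept.inter C D)
  | union {C D : Concept CN RN} : IsNNF C → IsNNF D → IsNNF (Concept.union C D)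
  | all {C : Concept CN RN} (S : Role RN) : IsNNF C → IsNNF (Concept.all S C)
  | ex {C : Concept CN RN} (S : Role RN) : IsNNF C → IsNNF (Concept.ex S C)

def AxInNNF : DLAxiom CN RN → Prop
  | .cinc C D => IsNNF C ∧ IsNNF D
  | .rinc _ _ => True

def FrmInNNF : Frm CN RN IN → Prop
  | .ax ax => AxInNNF ax
  | .assert _ => True

def KBInNNF (K : KB CN RN IN) : Prop := ∀ ax ∈ K.tbox, AxInNNF ax

/-! ### Classical counterpart translation (for concepts in NNF) -/

def clConcept {CN RN : Type} : Concept CN RN → Concept (CN ⊕ CN) RN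
  | .atom A => .atom (.inl A)
  | .neg (.atom A) => .atom (.inr A)
  | .tri (.atom A) => .atom (.inl A)
  | .tri (.neg (.atom A)) => .atom (.inr A)
  | .neg (.tri (.atom A)) => .neg (.atom (.inl A))
  | .neg (.tri (.neg (.atom A))) => .neg (.atom (.inr A))
  | .top => .top
  | .neg .top => .neg .top
  | .neg (.inter (.neg C) (.neg D)) => Concept.union (clConcept C) (clConcept D)
  | .neg (.all S (.neg C)) => Concept.ex S (clConcept C)
  | .inter C D => .inter (clConcept C) (clConcept D)
  | .all S C => .all S (clConcept C)
  | _ => .top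

def clAxiom : DLAxiom CN RN → DLAxiom (CN ⊕ CN) RN
  | .cinc C D => .cinc (clConcept C) (clConcept D)
  | .rinc S S' => .rinc S S'

def clAssertion : Assertion CN RN IN → Assertion (CN ⊕ CN) RN IN
  | .ca A a => .ca (.inl A) a
  | .ra R a b => .ra R a b

def clFrm : Frm CN RN IN → Frm (CN ⊕ CN) RN IN
  | .ax ax => .ax (clAxiom ax)
  | .assert α => .assert (clAssertion α)

def clKB (K : KB CN RN IN) : KB (CN ⊕ CN) RN IN where
  tbox := clAxiom '' K.tbox
  abox := clAssertion '' K.abox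
  tbox_finite := K.tbox_finite.image _
  abox_finite := K.abox_finite.image _

/-- The classical counterpart `I^cl` of a 4-interpretation. -/
def FourInterp.toClassical (I : FourInterp CN RN IN) : ClassInterp (CN ⊕ CN) RN IN where
  Dom := I.Dom
  dom_nonempty := I.dom_nonempty
  cext := Sum.elim I.cpos I.cneg
  rext := I.rext
  ind := I.ind

/-- The 4-counterpart of a classical interpretation over names `A⁺, A⁻`. -/
def ClassInterp.toFour (J : ClassInterp (CN ⊕ CN) RN IN) : FourInterp CN RN IN where
  Dom := J.Dom
  dom_nonempty := J.dom_nonempty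
  cpos := fun A => J.cext (.inl A)
  cneg := fun A => J.cext (.inr A)
  rext := J.rext
  ind := J.ind

/-! ### The △-prefixing translation -/

def triConcept : Concept CN RN → Concept CN RN
  | .top => .top
  | .atom A => .tri (.atom A)
  | .neg C => .neg (triConcept C)
  | .tri C => .tri (triConcept C)
  | .inter C D => .inter (triConcept C) (triConcept D)
  | .all S C => .all S (triConcept C)

def TriFree : Concept CN RN → Prop
  | .top => True
  | .atom _ => True
  | .neg C => TriFree C
  | .tri _ => False
  | .inter C D => TriFree C ∧ TriFree D
  | .all _ C => TriFree C

def AxTriFree : DLAxiom CN RN → Prop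
  | .cinc C D => TriFree C ∧ TriFree D
  | .rinc _ _ => True

def FrmTriFree : Frm CN RN IN → Prop
  | .ax ax => AxTriFree ax
  | .assert _ => True

def KBTriFree (K : KB CN RN IN) : Prop := ∀ ax ∈ K.tbox, AxTriFree ax

def triAxiom : DLAxiom CN RN → DLAxiom CN RN
  | .cinc C D => .cinc (triConcept C) (triConcept D)
  | .rinc S S' => .rinc S S'

def triFrm : Frm CN RN IN → Frm CN RN IN
  | .ax ax => .ax (triAxiom ax)
  | .assert α => .assert α

def triKB (K : KB CN RN IN) : KB CN RN IN where
  tbox := triAxiom '' K.tbox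
  abox := K.abox
  tbox_finite := K.tbox_finite.image _
  abox_finite := K.abox_finite

/-! ### Removing △ -/

def flatConcept : Concept CN RN → Concept CN RN
  | .top => .top
  | .atom A => .atom A
  | .neg C => .neg (flatConcept C)
  | .tri C => flatConcept C
  | .inter C D => .inter (flatConcept C) (flatConcept D)
  | .all S C => .all S (flatConcept C)

def flatAxiom : DLAxiom CN RN → DLAxiom CN RN
  | .cinc C D => .cinc (flatConcept C) (flatConcept D)
  | .rinc S S' => .rinc S S'

def flatKB (K : KB CN RN IN) : KB CN RN IN where
  tbox := flatAxiom '' K.tbox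
  abox := K.abox
  tbox_finite := K.tbox_finite.image _
  abox_finite := K.abox_finite

/-! ### ELHI_¬ knowledge bases -/

def AtomTop (C : Concept CN RN) : Prop := C = Concept.top ∨ ∃ A, C = Concept.atom A

def AtomTopBot (C : Concept CN RN) : Prop :=
  C = Concept.top ∨ C = Concept.bot ∨ ∃ A, C = Concept.atom A

def IsELHInegAxiom : DLAxiom CN RN → Prop
  | .rinc _ _ => True
  | .cinc L M =>
      (AtomTop L ∧ ∃ S B, AtomTop B ∧ M = Concept.ex S B) ∨
      ((∃ S A, AtomTop A ∧ L = Concept.ex S A) ∧ AtomTopBot M) ∨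
      ((∃ A B, AtomTop A ∧ AtomTop B ∧ L = Concept.inter A B) ∧ AtomTopBot M) ∨
      (AtomTop L ∧ ∃ B, AtomTop B ∧ M = Concept.neg B)

def IsELHInegKB (K : KB CN RN IN) : Prop := ∀ ax ∈ K.tbox, IsELHInegAxiom ax

/-- `K⁺`: drop all concept inclusions of the weak-disjointness form `A ⊑ ¬B`
(`B` a concept name; note that in `ELHI_¬` the derived constructors `∃S.B` and
`⊥` are not of this form). -/
def KPlus (K : KB CN RN IN) : KB CN RN IN where
  tbox := {ax ∈ K.tbox |
    ∀ (L : Concept CN RN) (B : CN), ax ≠ DLAxiom.cinc L (Concept.neg (Concept.atom B))}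
  abox := K.abox
  tbox_finite := K.tbox_finite.subset (Set.sep_subset _ _)
  abox_finite := K.abox_finite

/-! ### Conjunctive queries -/

inductive Term (V IN : Type) : Type where
  | var : V → Term V IN
  | ind : IN → Term V IN

structure CQ (CN RN IN V : Type) : Type where
  roleAtoms : Set (RN × Term V IN × Term V IN)
  concAtoms : Set (CN × Term V IN)
  roleAtoms_finite : roleAtoms.Finite
  concAtoms_finite : concAtoms.Finite

def FourInterp.cqMatch (I : FourInterp CN RN IN) (q : CQ CN RN IN V)
    (π : Term V IN → I.Dom) : Prop :=
  (∀ c : IN, π (Term.ind c) = I.ind c) ∧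
  (∀ p ∈ q.roleAtoms, (π p.2.1, π p.2.2) ∈ I.rext p.1) ∧
  (∀ p ∈ q.concAtoms, π p.2 ∈ I.cpos p.1)

def ClassInterp.cqMatch (J : ClassInterp CN RN IN) (q : CQ CN RN IN V)
    (π : Term V IN → J.Dom) : Prop :=
  (∀ c : IN, π (Term.ind c) = J.ind c) ∧
  (∀ p ∈ q.roleAtoms, (π p.2.1, π p.2.2) ∈ J.rext p.1) ∧
  (∀ p ∈ q.concAtoms, π p.2 ∈ J.cext p.1)

def fourEntailsCQ (K : KB CN RN IN) (q : CQ CN RN IN V) : Prop :=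
  ∀ I : FourInterp CN RN IN, I.satKB K → ∃ π, I.cqMatch q π

def clEntailsCQ (K : KB CN RN IN) (q : CQ CN RN IN V) : Prop :=
  ∀ J : ClassInterp CN RN IN, J.satKB K → ∃ π, J.cqMatch q π

/-! ### Conjunctive queries with values -/

inductive TVal : Type where
  | T | B | N | F

structure CQV (CN RN IN V : Type) : Type where
  roleAtoms : Set (RN × Term V IN × Term V IN)
  concAtoms : Set (CN × Term V IN)
  valAtoms : Set (TVal × CN × Term V IN)
  roleAtoms_finite : roleAtoms.Finite
  concAtoms_finite : concAtoms.Finite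
  valAtoms_finite : valAtoms.Finite

namespace CQV

def atV (q : CQV CN RN IN V) (X : TVal) : Set (CN × Term V IN) :=
  {p | (X, p.1, p.2) ∈ q.valAtoms}

theorem atV_finite (q : CQV CN RN IN V) (X : TVal) : (q.atV X).Finite := by
  have h : q.atV X ⊆ (fun w : TVal × CN × Term V IN => (w.2.1, w.2.2)) '' q.valAtoms := by
    rintro ⟨A, t⟩ h
    exact ⟨(X, A, t), h, rfl⟩
  exact (q.valAtoms_finite.image _).subset h

def atPlus (q : CQV CN RN IN V) : Set (CN × Term V IN) :=
  q.concAtoms ∪ q.atV TVal.T ∪ q.atV TVal.B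

def atBF (q : CQV CN RN IN V) : Set (CN × Term V IN) := q.atV TVal.B ∪ q.atV TVal.F
def atTN (q : CQV CN RN IN V) : Set (CN × Term V IN) := q.atV TVal.T ∪ q.atV TVal.N
def atFN (q : CQV CN RN IN V) : Set (CN × Term V IN) := q.atV TVal.F ∪ q.atV TVal.N

theorem atPlus_finite (q : CQV CN RN IN V) : q.atPlus.Finite :=
  (q.concAtoms_finite.union (q.atV_finite TVal.T)).union (q.atV_finite TVal.B)

theorem atBF_finite (q : CQV CN RN IN V) : q.atBF.Finite :=
  (q.atV_finite TVal.B).union (q.atV_finite TVal.F)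

end CQV

/-- Item 1 of the definition of answers: the match required in every 4-model. -/
def FourInterp.cqvMatch1 (I : FourInterp CN RN IN) (q : CQV CN RN IN V)
    (π : Term V IN → I.Dom) : Prop :=
  (∀ c : IN, π (Term.ind c) = I.ind c) ∧
  (∀ p ∈ q.roleAtoms, (π p.2.1, π p.2.2) ∈ I.rext p.1) ∧
  (∀ p ∈ q.atPlus, π p.2 ∈ I.cpos p.1) ∧
  (∀ p ∈ q.atBF, π p.2 ∈ I.cneg p.1)

/-- Item 2: the extra conditions required of a match in some 4-model. -/
def FourInterp.cqvMatch2 (I : FourInterp CN RN IN) (q : CQV CN RN IN V)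
    (π : Term V IN → I.Dom) : Prop :=
  (∀ p ∈ q.atTN, π p.2 ∉ I.cneg p.1) ∧
  (∀ p ∈ q.atFN, π p.2 ∉ I.cpos p.1)

def fourEntailsCQV (K : KB CN RN IN) (q : CQV CN RN IN V) : Prop :=
  (∀ I : FourInterp CN RN IN, I.satKB K → ∃ π, I.cqvMatch1 q π) ∧
  (∃ I : FourInterp CN RN IN, I.satKB K ∧ ∃ π, I.cqvMatch1 q π ∧ I.cqvMatch2 q π)


/-! ### The flattened query `q^♭` (T ↦ positive atom, F ↦ negated atom) -/

def ClassInterp.flatMatch (J : ClassInterp CN RN IN) (q : CQV CN RN IN V)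
    (π : Term V IN → J.Dom) : Prop :=
  (∀ c : IN, π (Term.ind c) = J.ind c) ∧
  (∀ p ∈ q.roleAtoms, (π p.2.1, π p.2.2) ∈ J.rext p.1) ∧
  (∀ p ∈ q.concAtoms ∪ q.atV TVal.T, π p.2 ∈ J.cext p.1) ∧
  (∀ p ∈ q.atV TVal.F, π p.2 ∉ J.cext p.1)

def clEntailsFlat (K : KB CN RN IN) (q : CQV CN RN IN V) : Prop :=
  ∀ J : ClassInterp CN RN IN, J.satKB K → ∃ π, J.flatMatch q π

/-! ### Reduction to classical query answering (Theorem queryreduction ingredients) -/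

/-- `c_t`: the fresh individual name associated to a term. -/
def Term.toInd : Term V IN → IN ⊕ V
  | .ind c => Sum.inl c
  | .var x => Sum.inr x

/-- `q⁺`, a conjunctive query over the names `A⁺ = inl A`, `A⁻ = inr A`. -/
def qPlus (q : CQV CN RN IN V) : CQ (CN ⊕ CN) RN IN V where
  roleAtoms := q.roleAtoms
  concAtoms := (fun p : CN × Term V IN => ((Sum.inl p.1 : CN ⊕ CN), p.2)) '' q.atPlus ∪
               (fun p : CN × Term V IN => ((Sum.inr p.1 : CN ⊕ CN), p.2)) '' q.atBF
  roleAtoms_finite := q.roleAtoms_finite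
  concAtoms_finite := (q.atPlus_finite.image _).union (q.atBF_finite.image _)

/-- The ABox `A_q` freezing the query `q⁺`, over individual names `IN ⊕ V`. -/
def aboxQ (q : CQV CN RN IN V) : Set (Assertion (CN ⊕ CN) RN (IN ⊕ V)) :=
  (fun p : RN × Term V IN × Term V IN =>
      Assertion.ra p.1 p.2.1.toInd p.2.2.toInd) '' (qPlus q).roleAtoms ∪
  (fun p : (CN ⊕ CN) × Term V IN =>
      Assertion.ca p.1 p.2.toInd) '' (qPlus q).concAtoms

theorem aboxQ_finite (q : CQV CN RN IN V) : (aboxQ q).Finite :=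
  ((qPlus q).roleAtoms_finite.image _).union ((qPlus q).concAtoms_finite.image _)

/-- The ground atoms of the disjunction `q_ctr`. -/
def ctrAtoms (q : CQV CN RN IN V) : Set ((CN ⊕ CN) × (IN ⊕ V)) :=
  (fun p : CN × Term V IN => ((Sum.inr p.1 : CN ⊕ CN), p.2.toInd)) '' q.atTN ∪
  (fun p : CN × Term V IN => ((Sum.inl p.1 : CN ⊕ CN), p.2.toInd)) '' q.atFN

/-- Classical entailment of a disjunction of ground concept atoms. -/
def clEntailsDisj {CN' IN' : Type} (K : KB CN' RN IN') (G : Set (CN' × IN')) : Prop :=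
  ∀ J : ClassInterp CN' RN IN', J.satKB K → ∃ g ∈ G, J.ind g.2 ∈ J.cext g.1

/-- Re-index the individual names of an assertion along `Sum.inl`. -/
def Assertion.extendInd : Assertion CN RN IN → Assertion CN RN (IN ⊕ V)
  | .ca A a => .ca A (Sum.inl a)
  | .ra R a b => .ra R (Sum.inl a) (Sum.inl b)

/-- Re-index a KB to the enlarged set of individual names `IN ⊕ V`,
and add a further finite ABox. -/
def KB.extendWith (K : KB CN RN IN) (A2 : Set (Assertion CN RN (IN ⊕ V)))
    (h : A2.Finite) : KB CN RN (IN ⊕ V) where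
  tbox := K.tbox
  abox := (Assertion.extendInd '' K.abox) ∪ A2
  tbox_finite := K.tbox_finite
  abox_finite := (K.abox_finite.image _).union h

/-! ### Repair-based semantics -/

def clConsistentS (T : Set (DLAxiom CN RN)) (A : Set (Assertion CN RN IN)) : Prop :=
  ∃ J : ClassInterp CN RN IN, (∀ ax ∈ T, J.satAx ax) ∧ (∀ α ∈ A, J.satAssert α)

def clEntailsAssertS (T : Set (DLAxiom CN RN)) (A : Set (Assertion CN RN IN))
    (φ : Assertion CN RN IN) : Prop :=
  ∀ J : ClassInterp CN RN IN,
    ((∀ ax ∈ T, J.satAx ax) ∧ (∀ α ∈ A, J.satAssert α)) → J.satAssert φ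

def clEntailsCQS (T : Set (DLAxiom CN RN)) (A : Set (Assertion CN RN IN))
    (q : CQ CN RN IN V) : Prop :=
  ∀ J : ClassInterp CN RN IN,
    ((∀ ax ∈ T, J.satAx ax) ∧ (∀ α ∈ A, J.satAssert α)) → ∃ π, J.cqMatch q π

/-- A repair: an inclusion-maximal subset of the ABox consistent with the TBox. -/
def IsRepair (K : KB CN RN IN) (A' : Set (Assertion CN RN IN)) : Prop :=
  A' ⊆ K.abox ∧ clConsistentS K.tbox A' ∧
  ∀ A'' : Set (Assertion CN RN IN),
    A' ⊆ A'' → A'' ⊆ K.abox → clConsistentS K.tbox A'' → A'' = A'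

/-- The closure `C*_T(A)`. -/
def Cstar (K : KB CN RN IN) : Set (Assertion CN RN IN) :=
  {φ | ∃ A', A' ⊆ K.abox ∧ clConsistentS K.tbox A' ∧ clEntailsAssertS K.tbox A' φ}

/-- Closed repairs. -/
def IsClosedRepair (K : KB CN RN IN) (Rp : Set (Assertion CN RN IN)) : Prop :=
  Rp ⊆ Cstar K ∧ clConsistentS K.tbox Rp ∧
  ∀ Rp' : Set (Assertion CN RN IN), Rp' ⊆ Cstar K → clConsistentS K.tbox Rp' →
    ¬(Rp ∩ K.abox ⊂ Rp' ∩ K.abox) ∧ ¬(Rp ∩ K.abox = Rp' ∩ K.abox ∧ Rp ⊂ Rp')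

def braveEntailsAssert (K : KB CN RN IN) (φ : Assertion CN RN IN) : Prop :=
  ∃ A', IsRepair K A' ∧ clEntailsAssertS K.tbox A' φ

def iarEntailsAssert (K : KB CN RN IN) (φ : Assertion CN RN IN) : Prop :=
  clEntailsAssertS K.tbox (⋂₀ {A' | IsRepair K A'}) φ

def carEntailsAssert (K : KB CN RN IN) (φ : Assertion CN RN IN) : Prop :=
  ∀ Rp, IsClosedRepair K Rp → clEntailsAssertS K.tbox Rp φ

/-- `K ⊨₄ T(A(a))`: `A(a)` is exactly-true entailed. -/
def fourEntailsT (K : KB CN RN IN) (A : CN) (a : IN) : Prop :=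
  (∀ I : FourInterp CN RN IN, I.satKB K → I.ind a ∈ I.cpos A) ∧
  (∃ I : FourInterp CN RN IN, I.satKB K ∧ I.ind a ∈ I.cpos A ∧ I.ind a ∉ I.cneg A)

/-! ### The chase for ELHI_¬ -/

/-- Chase elements: individual names plus fresh successors created by
existential axioms. -/
inductive CE (CN RN IN : Type) : Type where
  | base : IN → CE CN RN IN
  | step : CE CN RN IN → DLAxiom CN RN → CE CN RN IN

mutual
/-- `ChaseC K A d`: the chase of `K` puts element `d` in concept name `A`. -/
inductive ChaseC : KB CN RN IN → CN → CE CN RN IN → Prop where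
  | abox {K : KB CN RN IN} {A a} :
      Assertion.ca A a ∈ K.abox → ChaseC K A (.base a)
  | inter {K : KB CN RN IN} {L₁ L₂ : Concept CN RN} {B d} :
      DLAxiom.cinc (Concept.inter L₁ L₂) (Concept.atom B) ∈ K.tbox →
      (∀ A, L₁ = Concept.atom A → ChaseC K A d) →
      (∀ A, L₂ = Concept.atom A → ChaseC K A d) →
      ChaseC K B d
  | exlName {K : KB CN RN IN} {R : RN} {L : Concept CN RN} {B d e} :
      DLAxiom.cinc (Concept.ex (Role.name R) L) (Concept.atom B) ∈ K.tbox →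
      ChaseR K R d e → (∀ A, L = Concept.atom A → ChaseC K A e) →
      ChaseC K B d
  | exlInv {K : KB CN RN IN} {R : RN} {L : Concept CN RN} {B d e} :
      DLAxiom.cinc (Concept.ex (Role.inv R) L) (Concept.atom B) ∈ K.tbox →
      ChaseR K R e d → (∀ A, L = Concept.atom A → ChaseC K A e) →
      ChaseC K B d
  | exrFill {K : KB CN RN IN} {L : Concept CN RN} {S : Role RN} {B d} :
      DLAxiom.cinc L (Concept.ex S (Concept.atom B)) ∈ K.tbox →
      (∀ A, L = Concept.atom A → ChaseC K A d) →
      ChaseC K B (.step d (DLAxiom.cinc L (Concept.ex S (Concept.atom B))))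

/-- `ChaseR K R d e`: the chase of `K` puts the pair `(d,e)` in role name `R`. -/
inductive ChaseR : KB CN RN IN → RN → CE CN RN IN → CE CN RN IN → Prop where
  | abox {K : KB CN RN IN} {R a b} :
      Assertion.ra R a b ∈ K.abox → ChaseR K R (.base a) (.base b)
  | rincNN {K : KB CN RN IN} {R₁ R₂ d e} :
      DLAxiom.rinc (Role.name R₁) (Role.name R₂) ∈ K.tbox →
      ChaseR K R₁ d e → ChaseR K R₂ d e
  | rincNI {K : KB CN RN IN} {R₁ R₂ d e} :
      DLAxiom.rinc (Role.name R₁) (Role.inv R₂) ∈ K.tbox →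
      ChaseR K R₁ d e → ChaseR K R₂ e d
  | rincIN {K : KB CN RN IN} {R₁ R₂ d e} :
      DLAxiom.rinc (Role.inv R₁) (Role.name R₂) ∈ K.tbox →
      ChaseR K R₁ e d → ChaseR K R₂ d e
  | rincII {K : KB CN RN IN} {R₁ R₂ d e} :
      DLAxiom.rinc (Role.inv R₁) (Role.inv R₂) ∈ K.tbox →
      ChaseR K R₁ e d → ChaseR K R₂ e d
  | exrEdgeName {K : KB CN RN IN} {L Bc : Concept CN RN} {R : RN} {d} :
      DLAxiom.cinc L (Concept.ex (Role.name R) Bc) ∈ K.tbox →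
      (∀ A, L = Concept.atom A → ChaseC K A d) →
      ChaseR K R d (.step d (DLAxiom.cinc L (Concept.ex (Role.name R) Bc)))
  | exrEdgeInv {K : KB CN RN IN} {L Bc : Concept CN RN} {R : RN} {d} :
      DLAxiom.cinc L (Concept.ex (Role.inv R) Bc) ∈ K.tbox →
      (∀ A, L = Concept.atom A → ChaseC K A d) →
      ChaseR K R (.step d (DLAxiom.cinc L (Concept.ex (Role.inv R) Bc))) d
end

/-! ### Auxiliary development for brave_implies_four -/

section BraveFour

variable {CN RN IN : Type}

/-- membership in the positive extension of an existential restriction -/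
lemma mem_pExt_ex {I : FourInterp CN RN IN} {S : Role RN} {C : Concept CN RN} {x : I.Dom} :
    x ∈ I.pExt (Concept.ex S C) ↔ ∃ y, (x, y) ∈ I.rInterp S ∧ y ∈ I.pExt C := Iff.rfl

lemma atomTop_pext {I : FourInterp CN RN IN} {L : Concept CN RN} {x : I.Dom} (hL : AtomTop L)
    (h : ∀ A, L = Concept.atom A → x ∈ I.cpos A) : x ∈ I.pExt L := by
  rcases hL with rfl | ⟨A, rfl⟩
  · exact Set.mem_univ x
  · exact h A rfl

/-! Shape lemmas for ELHI¬ axioms -/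

lemma elhi_inter_shape {K : KB CN RN IN} (hK : IsELHInegKB K) {L₁ L₂ : Concept CN RN} {B : CN}
    (h : DLAxiom.cinc (Concept.inter L₁ L₂) (Concept.atom B) ∈ K.tbox) :
    AtomTop L₁ ∧ AtomTop L₂ := by
  rcases hK _ h with ⟨hL, S, B', hB', hM⟩ | ⟨⟨S, A, hA, hL⟩, hM⟩ |
    ⟨⟨A, B', hA, hB', hL⟩, hM⟩ | ⟨hL, B', hB', hM⟩
  · simp [Concept.ex] at hM
  · simp [Concept.ex] at hL
  · injection hL with h1 h2; subst h1; subst h2; exact ⟨hA, hB'⟩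
  · simp at hM

lemma elhi_exl_shape {K : KB CN RN IN} (hK : IsELHInegKB K) {S : Role RN}
    {L : Concept CN RN} {B : CN}
    (h : DLAxiom.cinc (Concept.ex S L) (Concept.atom B) ∈ K.tbox) : AtomTop L := by
  rcases hK _ h with ⟨hL, S', B', hB', hM⟩ | ⟨⟨S', A, hA, hL⟩, hM⟩ |
    ⟨⟨A, B', hA, hB', hL⟩, hM⟩ | ⟨hL, B', hB', hM⟩
  · simp [Concept.ex] at hM
  · simp only [Concept.ex, Concept.neg.injEq, Concept.all.injEq] at hL
    obtain ⟨rfl, rfl⟩ := hL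
    exact hA
  · simp [Concept.ex] at hL
  · simp at hM

lemma elhi_exr_shape {K : KB CN RN IN} (hK : IsELHInegKB K) {S : Role RN}
    {L Bc : Concept CN RN}
    (h : DLAxiom.cinc L (Concept.ex S Bc) ∈ K.tbox) : AtomTop L := by
  rcases hK _ h with ⟨hL, S', B', hB', hM⟩ | ⟨⟨S', A, hA, hL⟩, hM⟩ |
    ⟨⟨A, B', hA, hB', hL⟩, hM⟩ | ⟨hL, B', hB', hM⟩
  · exact hL
  · rcases hM with hM | hM | ⟨A', hM⟩ <;> simp [Concept.ex, Concept.bot] at hM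
  · rcases hM with hM | hM | ⟨A', hM⟩ <;> simp [Concept.ex, Concept.bot] at hM
  · exact hL

/-! The homomorphism from the chase into a 4-model -/

open Classical in
noncomputable def stepPick (I : FourInterp CN RN IN) (x : I.Dom) : DLAxiom CN RN → I.Dom
  | .cinc _ (.neg (.all S (.neg Bc))) =>
      if hn : {y | (x, y) ∈ I.rInterp S ∧ y ∈ I.pExt Bc}.Nonempty then hn.choose
      else Classical.choice I.dom_nonempty
  | _ => Classical.choice I.dom_nonempty

lemma stepPick_spec (I : FourInterp CN RN IN) (x : I.Dom) {L Bc : Concept CN RN} {S : Role RN}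
    (hn : {y | (x, y) ∈ I.rInterp S ∧ y ∈ I.pExt Bc}.Nonempty) :
    (x, stepPick I x (.cinc L (Concept.ex S Bc))) ∈ I.rInterp S ∧
      stepPick I x (.cinc L (Concept.ex S Bc)) ∈ I.pExt Bc := by
  have h : stepPick I x (.cinc L (Concept.ex S Bc)) = hn.choose := by
    simp [stepPick, Concept.ex, dif_pos hn]
  rw [h]; exact hn.choose_spec

noncomputable def hmap (I : FourInterp CN RN IN) : CE CN RN IN → I.Dom
  | .base a => I.ind a
  | .step d ax => stepPick I (hmap I d) ax

theorem chase_sound (K : KB CN RN IN) (hK : IsELHInegKB K)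
    (I : FourInterp CN RN IN) (hI : I.satKB K) :
    (∀ (A : CN) (d : CE CN RN IN), ChaseC K A d → hmap I d ∈ I.cpos A) ∧
    (∀ (R : RN) (d e : CE CN RN IN), ChaseR K R d e → (hmap I d, hmap I e) ∈ I.rext R) := by
  have m1 : ∀ {A : CN} {a : IN}, Assertion.ca A a ∈ K.abox → hmap I (.base a) ∈ I.cpos A := by
    intro A a h
    exact hI.2 _ h
  have m2 : ∀ {L₁ L₂ : Concept CN RN} {B : CN} {d : CE CN RN IN},
      DLAxiom.cinc (Concept.inter L₁ L₂) (Concept.atom B) ∈ K.tbox →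
      (∀ A, L₁ = Concept.atom A → hmap I d ∈ I.cpos A) →
      (∀ A, L₂ = Concept.atom A → hmap I d ∈ I.cpos A) →
      hmap I d ∈ I.cpos B := by
    intro L₁ L₂ B d h ih1 ih2
    obtain ⟨h1, h2⟩ := elhi_inter_shape hK h
    exact hI.1 _ h ⟨atomTop_pext h1 ih1, atomTop_pext h2 ih2⟩
  have m3 : ∀ {R : RN} {L : Concept CN RN} {B : CN} {d e : CE CN RN IN},
      DLAxiom.cinc (Concept.ex (Role.name R) L) (Concept.atom B) ∈ K.tbox →
      (hmap I d, hmap I e) ∈ I.rext R →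
      (∀ A, L = Concept.atom A → hmap I e ∈ I.cpos A) →
      hmap I d ∈ I.cpos B := by
    intro R L B d e h ihR ihC
    exact hI.1 _ h (mem_pExt_ex.mpr ⟨hmap I e, ihR, atomTop_pext (elhi_exl_shape hK h) ihC⟩)
  have m4 : ∀ {R : RN} {L : Concept CN RN} {B : CN} {d e : CE CN RN IN},
      DLAxiom.cinc (Concept.ex (Role.inv R) L) (Concept.atom B) ∈ K.tbox →
      (hmap I e, hmap I d) ∈ I.rext R →
      (∀ A, L = Concept.atom A → hmap I e ∈ I.cpos A) →
      hmap I d ∈ I.cpos B := by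
    intro R L B d e h ihR ihC
    exact hI.1 _ h (mem_pExt_ex.mpr ⟨hmap I e, ihR, atomTop_pext (elhi_exl_shape hK h) ihC⟩)
  have m5 : ∀ {L : Concept CN RN} {S : Role RN} {B : CN} {d : CE CN RN IN},
      DLAxiom.cinc L (Concept.ex S (Concept.atom B)) ∈ K.tbox →
      (∀ A, L = Concept.atom A → hmap I d ∈ I.cpos A) →
      hmap I (.step d (DLAxiom.cinc L (Concept.ex S (Concept.atom B)))) ∈ I.cpos B := by
    intro L S B d h ih
    have hx : hmap I d ∈ I.pExt L := atomTop_pext (elhi_exr_shape hK h) ih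
    have hn : {y | (hmap I d, y) ∈ I.rInterp S ∧ y ∈ I.pExt (Concept.atom B)}.Nonempty :=
      mem_pExt_ex.mp (hI.1 _ h hx)
    exact (stepPick_spec I (hmap I d) (L := L) hn).2
  have m6 : ∀ {R : RN} {a b : IN}, Assertion.ra R a b ∈ K.abox →
      (hmap I (.base a), hmap I (.base b)) ∈ I.rext R := by
    intro R a b h
    exact hI.2 _ h
  have m7 : ∀ {R₁ R₂ : RN} {d e : CE CN RN IN},
      DLAxiom.rinc (Role.name R₁) (Role.name R₂) ∈ K.tbox →
      (hmap I d, hmap I e) ∈ I.rext R₁ → (hmap I d, hmap I e) ∈ I.rext R₂ := by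
    intro R₁ R₂ d e h ih
    exact hI.1 _ h ih
  have m8 : ∀ {R₁ R₂ : RN} {d e : CE CN RN IN},
      DLAxiom.rinc (Role.name R₁) (Role.inv R₂) ∈ K.tbox →
      (hmap I d, hmap I e) ∈ I.rext R₁ → (hmap I e, hmap I d) ∈ I.rext R₂ := by
    intro R₁ R₂ d e h ih
    exact hI.1 _ h ih
  have m9 : ∀ {R₁ R₂ : RN} {d e : CE CN RN IN},
      DLAxiom.rinc (Role.inv R₁) (Role.name R₂) ∈ K.tbox →
      (hmap I e, hmap I d) ∈ I.rext R₁ → (hmap I d, hmap I e) ∈ I.rext R₂ := by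
    intro R₁ R₂ d e h ih
    exact hI.1 _ h (show ((hmap I d, hmap I e) : I.Dom × I.Dom) ∈ I.rInterp (Role.inv R₁) from ih)
  have m10 : ∀ {R₁ R₂ : RN} {d e : CE CN RN IN},
      DLAxiom.rinc (Role.inv R₁) (Role.inv R₂) ∈ K.tbox →
      (hmap I e, hmap I d) ∈ I.rext R₁ → (hmap I e, hmap I d) ∈ I.rext R₂ := by
    intro R₁ R₂ d e h ih
    exact hI.1 _ h (show ((hmap I d, hmap I e) : I.Dom × I.Dom) ∈ I.rInterp (Role.inv R₁) from ih)
  have m11 : ∀ {L Bc : Concept CN RN} {R : RN} {d : CE CN RN IN},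
      DLAxiom.cinc L (Concept.ex (Role.name R) Bc) ∈ K.tbox →
      (∀ A, L = Concept.atom A → hmap I d ∈ I.cpos A) →
      (hmap I d, hmap I (.step d (DLAxiom.cinc L (Concept.ex (Role.name R) Bc)))) ∈ I.rext R := by
    intro L Bc R d h ih
    have hx : hmap I d ∈ I.pExt L := atomTop_pext (elhi_exr_shape hK h) ih
    have hn : {y | (hmap I d, y) ∈ I.rInterp (Role.name R) ∧ y ∈ I.pExt Bc}.Nonempty :=
      mem_pExt_ex.mp (hI.1 _ h hx)
    exact (stepPick_spec I (hmap I d) (L := L) hn).1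
  have m12 : ∀ {L Bc : Concept CN RN} {R : RN} {d : CE CN RN IN},
      DLAxiom.cinc L (Concept.ex (Role.inv R) Bc) ∈ K.tbox →
      (∀ A, L = Concept.atom A → hmap I d ∈ I.cpos A) →
      (hmap I (.step d (DLAxiom.cinc L (Concept.ex (Role.inv R) Bc))), hmap I d) ∈ I.rext R := by
    intro L Bc R d h ih
    have hx : hmap I d ∈ I.pExt L := atomTop_pext (elhi_exr_shape hK h) ih
    have hn : {y | (hmap I d, y) ∈ I.rInterp (Role.inv R) ∧ y ∈ I.pExt Bc}.Nonempty :=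
      mem_pExt_ex.mp (hI.1 _ h hx)
    exact (stepPick_spec I (hmap I d) (L := L) hn).1
  refine ⟨fun A d hd => ?_, fun R d e hr => ?_⟩
  · exact ChaseC.rec (motive_1 := fun A d _ => hmap I d ∈ I.cpos A)
      (motive_2 := fun R d e _ => (hmap I d, hmap I e) ∈ I.rext R)
      (fun h => m1 h)
      (fun h _ _ ih1 ih2 => m2 h ih1 ih2)
      (fun h _ _ ihR ihC => m3 h ihR ihC)
      (fun h _ _ ihR ihC => m4 h ihR ihC)
      (fun h _ ih => m5 h ih)
      (fun h => m6 h)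
      (fun h _ ih => m7 h ih)
      (fun h _ ih => m8 h ih)
      (fun h _ ih => m9 h ih)
      (fun h _ ih => m10 h ih)
      (fun h _ ih => m11 h ih)
      (fun h _ ih => m12 h ih)
      hd
  · exact ChaseR.rec (motive_1 := fun A d _ => hmap I d ∈ I.cpos A)
      (motive_2 := fun R d e _ => (hmap I d, hmap I e) ∈ I.rext R)
      (fun h => m1 h)
      (fun h _ _ ih1 ih2 => m2 h ih1 ih2)
      (fun h _ _ ihR ihC => m3 h ihR ihC)
      (fun h _ _ ihR ihC => m4 h ihR ihC)
      (fun h _ ih => m5 h ih)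
      (fun h => m6 h)
      (fun h _ ih => m7 h ih)
      (fun h _ ih => m8 h ih)
      (fun h _ ih => m9 h ih)
      (fun h _ ih => m10 h ih)
      (fun h _ ih => m11 h ih)
      (fun h _ ih => m12 h ih)
      hr

end BraveFour

section BraveFour2

variable {CN RN IN : Type}

/-- membership in the classical extension of an existential restriction -/
lemma mem_ext_ex {J : ClassInterp CN RN IN} {S : Role RN} {C : Concept CN RN} {x : J.Dom} :
    x ∈ J.ext (Concept.ex S C) ↔ ∃ y, (x, y) ∈ J.rInterp S ∧ y ∈ J.ext C := by
  simp only [Concept.ex, ClassInterp.ext, Set.mem_compl_iff, Set.mem_setOf_eq]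
  push_neg
  simp only [Set.not_notMem]

/-- The chase interpretation (over a fresh anonymous individual). -/
def chaseInterp (K3 : KB CN RN (Option IN)) : ClassInterp CN RN IN where
  Dom := CE CN RN (Option IN)
  dom_nonempty := ⟨.base none⟩
  cext A := {d | ChaseC K3 A d}
  rext R := {p | ChaseR K3 R p.1 p.2}
  ind a := .base (some a)

theorem chaseInterp_satAx {K3 : KB CN RN (Option IN)} (hK3 : IsELHInegKB K3)
    (I₀ : FourInterp CN RN (Option IN)) (hI₀ : I₀.satKB K3)
    (hsep : ∀ (A : CN) (x : I₀.Dom), x ∈ I₀.cpos A → x ∉ I₀.cneg A) :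
    ∀ ax ∈ K3.tbox, (chaseInterp K3).satAx ax := by
  obtain ⟨soundC, soundR⟩ := chase_sound K3 hK3 I₀ hI₀
  intro ax hax
  cases ax with
  | rinc S S' =>
    rcases S with R | R <;> rcases S' with R' | R' <;>
      rintro ⟨d, e⟩ hp
    · exact ChaseR.rincNN hax hp
    · exact ChaseR.rincNI hax hp
    · exact ChaseR.rincIN hax hp
    · exact ChaseR.rincII hax hp
  | cinc L M =>
    rcases hK3 _ hax with ⟨hL, S, B, hB, rfl⟩ | ⟨⟨S, A, hA, rfl⟩, hM⟩ |
      ⟨⟨A, B, hA, hB, rfl⟩, hM⟩ | ⟨hL, B, hB, rfl⟩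
    · -- L ⊑ ∃S.B
      intro x hx
      have hcond : ∀ A, L = Concept.atom A → ChaseC K3 A x := by
        rcases hL with rfl | ⟨A0, rfl⟩
        · intro A h; cases h
        · intro A h; cases h; exact hx
      rcases S with R | R
      · refine mem_ext_ex.mpr ⟨x.step (DLAxiom.cinc L (Concept.ex (Role.name R) B)),
          ChaseR.exrEdgeName hax hcond, ?_⟩
        rcases hB with rfl | ⟨B0, rfl⟩
        · exact Set.mem_univ _
        · exact ChaseC.exrFill (S := Role.name R) hax hcond
      · refine mem_ext_ex.mpr ⟨x.step (DLAxiom.cinc L (Concept.ex (Role.inv R) B)),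
          ChaseR.exrEdgeInv hax hcond, ?_⟩
        rcases hB with rfl | ⟨B0, rfl⟩
        · exact Set.mem_univ _
        · exact ChaseC.exrFill (S := Role.inv R) hax hcond
    · -- ∃S.A ⊑ M
      intro x hx
      obtain ⟨y, hxy, hyA⟩ := mem_ext_ex.mp hx
      have hcond : ∀ A', A = Concept.atom A' → ChaseC K3 A' y := by
        rcases hA with rfl | ⟨A0, rfl⟩
        · intro A' h; cases h
        · intro A' h; cases h; exact hyA
      rcases hM with rfl | rfl | ⟨B, rfl⟩
      · exact Set.mem_univ x
      · exfalso
        have hr : (hmap I₀ x, hmap I₀ y) ∈ I₀.rInterp S := by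
          rcases S with R | R
          · exact soundR R x y hxy
          · exact soundR R y x hxy
        have hyA' : hmap I₀ y ∈ I₀.pExt A :=
          atomTop_pext hA (fun A' h => soundC A' y (hcond A' h))
        exact absurd (hI₀.1 _ hax (mem_pExt_ex.mpr ⟨_, hr, hyA'⟩)) (Set.notMem_empty _)
      · rcases S with R | R
        · exact ChaseC.exlName hax hxy hcond
        · exact ChaseC.exlInv hax hxy hcond
    · -- A ⊓ B ⊑ M
      rintro x ⟨hx1, hx2⟩
      have hcond1 : ∀ A', A = Concept.atom A' → ChaseC K3 A' x := by
        rcases hA with rfl | ⟨A0, rfl⟩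
        · intro A' h; cases h
        · intro A' h; cases h; exact hx1
      have hcond2 : ∀ A', B = Concept.atom A' → ChaseC K3 A' x := by
        rcases hB with rfl | ⟨B0, rfl⟩
        · intro A' h; cases h
        · intro A' h; cases h; exact hx2
      rcases hM with rfl | rfl | ⟨C, rfl⟩
      · exact Set.mem_univ x
      · exfalso
        have hxA : hmap I₀ x ∈ I₀.pExt A :=
          atomTop_pext hA (fun A' h => soundC A' x (hcond1 A' h))
        have hxB : hmap I₀ x ∈ I₀.pExt B :=
          atomTop_pext hB (fun A' h => soundC A' x (hcond2 A' h))
        exact absurd (hI₀.1 _ hax ⟨hxA, hxB⟩) (Set.notMem_empty _)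
      · exact ChaseC.inter hax hcond1 hcond2
    · -- L ⊑ ¬B
      intro x hx hxB
      have hxL : hmap I₀ x ∈ I₀.pExt L := by
        refine atomTop_pext hL ?_
        rcases hL with rfl | ⟨A0, rfl⟩
        · intro A h; cases h
        · intro A h; cases h; exact soundC A0 x hx
      have h2 := hI₀.1 _ hax hxL
      rcases hB with rfl | ⟨B0, rfl⟩
      · exact absurd h2 (Set.notMem_empty _)
      · exact hsep B0 (hmap I₀ x) (soundC B0 x hxB) h2

end BraveFour2

section BraveFour3

variable {CN RN IN : Type}

/-- A classical interpretation viewed as a 4-interpretation. -/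
def classToFour (M : ClassInterp CN RN IN) : FourInterp CN RN IN where
  Dom := M.Dom
  dom_nonempty := M.dom_nonempty
  cpos := M.cext
  cneg A := (M.cext A)ᶜ
  rext := M.rext
  ind := M.ind

lemma classToFour_rInterp (M : ClassInterp CN RN IN) (S : Role RN) :
    (classToFour M).rInterp S = M.rInterp S := by cases S <;> rfl

lemma classToFour_ext (M : ClassInterp CN RN IN) (C : Concept CN RN) (hC : TriFree C) :
    (classToFour M).ext C = (M.ext C, (M.ext C)ᶜ) := by
  induction C with
  | top => simp [FourInterp.ext, ClassInterp.ext]; rfl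
  | atom A => rfl
  | neg C ih =>
    have h := ih hC
    simp only [FourInterp.ext, ClassInterp.ext, h, compl_compl]; rfl
  | tri C ih => exact hC.elim
  | inter C D ihC ihD =>
    obtain ⟨h1, h2⟩ := hC
    simp only [FourInterp.ext, ClassInterp.ext, ihC h1, ihD h2, Set.compl_inter]; rfl
  | all S C ih =>
    have h := ih hC
    simp only [FourInterp.ext, ClassInterp.ext, h, classToFour_rInterp]
    refine congrArg₂ Prod.mk rfl ?_
    ext x
    simp only [Set.mem_setOf_eq, Set.mem_compl_iff]
    constructor
    · rintro ⟨y, hy, hyc⟩ hall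
      exact hyc (hall y hy)
    · intro hna
      by_contra hne
      apply hna
      intro y hy
      by_contra hyc
      exact hne ⟨y, hy, hyc⟩

lemma AtomTop.triFree {C : Concept CN RN} (h : AtomTop C) : TriFree C := by
  rcases h with rfl | ⟨A, rfl⟩ <;> trivial

lemma AtomTopBot.triFree {C : Concept CN RN} (h : AtomTopBot C) : TriFree C := by
  rcases h with rfl | rfl | ⟨A, rfl⟩ <;> trivial

lemma elhi_triFree {L M : Concept CN RN} (h : IsELHInegAxiom (.cinc L M)) :
    TriFree L ∧ TriFree M := by
  rcases h with ⟨hL, S, B, hB, rfl⟩ | ⟨⟨S, A, hA, rfl⟩, hM⟩ |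
    ⟨⟨A, B, hA, hB, rfl⟩, hM⟩ | ⟨hL, B, hB, rfl⟩
  · exact ⟨hL.triFree, hB.triFree⟩
  · exact ⟨hA.triFree, hM.triFree⟩
  · exact ⟨⟨hA.triFree, hB.triFree⟩, hM.triFree⟩
  · exact ⟨hL.triFree, hB.triFree⟩

lemma classToFour_satAx (M : ClassInterp CN RN IN) {ax : DLAxiom CN RN}
    (hax : IsELHInegAxiom ax) (h : M.satAx ax) : (classToFour M).satAx ax := by
  cases ax with
  | rinc S S' =>
    show (classToFour M).rInterp S ⊆ (classToFour M).rInterp S'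
    rw [classToFour_rInterp, classToFour_rInterp]; exact h
  | cinc L M' =>
    obtain ⟨hL, hM'⟩ := elhi_triFree hax
    show (classToFour M).pExt L ⊆ (classToFour M).pExt M'
    have e1 : (classToFour M).pExt L = M.ext L := congrArg Prod.fst (classToFour_ext M L hL)
    have e2 : (classToFour M).pExt M' = M.ext M' := congrArg Prod.fst (classToFour_ext M M' hM')
    rw [e1, e2]; exact h

/-- Extend the individual names of a 4-interpretation by an anonymous one. -/
noncomputable def extOpt (I : FourInterp CN RN IN) : FourInterp CN RN (Option IN) where
  Dom := I.Dom
  dom_nonempty := I.dom_nonempty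
  cpos := I.cpos
  cneg := I.cneg
  rext := I.rext
  ind o := o.elim (Classical.choice I.dom_nonempty) I.ind

lemma extOpt_rInterp (I : FourInterp CN RN IN) (S : Role RN) :
    (extOpt I).rInterp S = I.rInterp S := by cases S <;> rfl

lemma extOpt_ext (I : FourInterp CN RN IN) (C : Concept CN RN) :
    (extOpt I).ext C = I.ext C := by
  induction C with
  | top => rfl
  | atom A => rfl
  | neg C ih => simp only [FourInterp.ext, ih]; rfl
  | tri C ih => simp only [FourInterp.ext, ih]; rfl
  | inter C D ihC ihD => simp only [FourInterp.ext, ihC, ihD]; rfl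
  | all S C ih =>
    simp only [FourInterp.ext, ih, extOpt_rInterp]
    rfl

lemma extOpt_satAx (I : FourInterp CN RN IN) {ax : DLAxiom CN RN} (h : I.satAx ax) :
    (extOpt I).satAx ax := by
  cases ax with
  | rinc S S' =>
    show (extOpt I).rInterp S ⊆ (extOpt I).rInterp S'
    rw [extOpt_rInterp, extOpt_rInterp]; exact h
  | cinc L M' =>
    show (extOpt I).pExt L ⊆ (extOpt I).pExt M'
    show ((extOpt I).ext L).1 ⊆ ((extOpt I).ext M').1
    rw [extOpt_ext, extOpt_ext]; exact h

/-- Re-index an assertion to `Option IN`. -/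
def mapOptA : Assertion CN RN IN → Assertion CN RN (Option IN)
  | .ca A a => .ca A (some a)
  | .ra R a b => .ra R (some a) (some b)

end BraveFour3

/-- for ELHI_¬ KBs with classically consistent TBox,
brave entailment implies four-valued entailment of BCQs. -/
theorem brave_implies_four {CN RN IN V : Type} (K : KB CN RN IN)
    (hK : IsELHInegKB K)
    (hT : clConsistentS K.tbox (∅ : Set (Assertion CN RN IN)))
    (q : CQ CN RN IN V)
    (hbrave : ∃ A', IsRepair K A' ∧ clEntailsCQS K.tbox A' q) :
    fourEntailsCQ K q := by
  classical
  obtain ⟨A', ⟨hsub, hcons, _⟩, hent⟩ := hbrave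
  intro I hI
  -- the KB over `Option IN` whose ABox is the repair
  set K3 : KB CN RN (Option IN) :=
    ⟨K.tbox, mapOptA '' A', K.tbox_finite, (K.abox_finite.subset hsub).image _⟩ with hK3def
  have hK3 : IsELHInegKB K3 := fun ax h => hK ax h
  -- the given 4-model, extended
  have hI' : (extOpt I).satKB K3 := by
    constructor
    · intro ax hax
      exact extOpt_satAx I (hI.1 ax hax)
    · rintro α ⟨β, hβ, rfl⟩
      have hβ' := hI.2 β (hsub hβ)
      cases β with
      | ca A a => exact hβ'
      | ra R a b => exact hβ'
  -- a separated 4-model coming from a classical model of ⟨T, A'⟩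
  obtain ⟨M, hMt, hMa⟩ := hcons
  have hM0 : (extOpt (classToFour M)).satKB K3 := by
    constructor
    · intro ax hax
      exact extOpt_satAx _ (classToFour_satAx M (hK ax hax) (hMt ax hax))
    · rintro α ⟨β, hβ, rfl⟩
      have hβ' := hMa β hβ
      cases β with
      | ca A a => exact hβ'
      | ra R a b => exact hβ'
  have hsep : ∀ (A : CN) (x : (extOpt (classToFour M)).Dom),
      x ∈ (extOpt (classToFour M)).cpos A → x ∉ (extOpt (classToFour M)).cneg A :=
    fun A x hx hn => hn hx
  -- the chase is a classical model of ⟨T, A'⟩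
  have hchase : (∀ ax ∈ K.tbox, (chaseInterp K3).satAx ax) ∧
      (∀ α ∈ A', (chaseInterp K3).satAssert α) := by
    constructor
    · intro ax hax
      exact chaseInterp_satAx hK3 _ hM0 hsep ax hax
    · intro α hα
      cases α with
      | ca A a => exact ChaseC.abox ⟨_, hα, rfl⟩
      | ra R a b => exact ChaseR.abox ⟨_, hα, rfl⟩
  obtain ⟨π₀, hπ1, hπ2, hπ3⟩ := hent (chaseInterp K3) hchase
  obtain ⟨soundC, soundR⟩ := chase_sound K3 hK3 (extOpt I) hI'
  refine ⟨fun t => hmap (extOpt I) (π₀ t), ?_, ?_, ?_⟩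
  · intro c
    show hmap (extOpt I) (π₀ (Term.ind c)) = I.ind c
    rw [hπ1 c]
    rfl
  · intro p hp
    exact soundR _ _ _ (hπ2 p hp)
  · intro p hp
    exact soundC _ _ (hπ3 p hp)
end Para
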